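/- For the quartic Hamiltonian H4 = p1^2 + p2^2 + Σ_{n=1}^4 γ_n (q1 p1 + q2 p2)^n, the function I4 = I3 + γ4((q2^4 - q1^4) p2^4 + 4(q1^3 q2 + q1 q2^3) p2^3 p1 + (q1^4 - q2^4) p2^2 p1^2) satisfies {H4, I4} = 0, where I3 = p2^2 + γ1 q2 p2 + γ2(q1^2+q2^2)p2^2 + γ3(q2^3 p2^3 + (q1^3+3q1 q2^2)p2^2 p1 - q2^3 p2 p1^2). -/

import Mathlib

open Real

/-- Canonical Poisson bracket on ℝ⁴ with coordinates (q1, q2, p1, p2). -/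
noncomputable def pb (f g : ℝ → ℝ → ℝ → ℝ → ℝ) : ℝ → ℝ → ℝ → ℝ → ℝ :=
  fun q1 q2 p1 p2 =>
      deriv (fun x => f x q2 p1 p2) q1 * deriv (fun x => g q1 q2 x p2) p1
    + deriv (fun x => f q1 x p1 p2) q2 * deriv (fun x => g q1 q2 p1 x) p2
    - deriv (fun x => f q1 q2 x p2) p1 * deriv (fun x => g x q2 p1 p2) q1
    - deriv (fun x => f q1 q2 p1 x) p2 * deriv (fun x => g q1 x p1 p2) q2

lemma deriv_hmul (c x : ℝ) : deriv (HMul.hMul c) x = c := by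
  simpa using ((hasDerivAt_id x).const_mul c).deriv

set_option maxHeartbeats 4000000 in
theorem quartic_I4_is_constant_of_motion (γ1 γ2 γ3 γ4 : ℝ) :
    pb (fun q1 q2 p1 p2 =>
          p1^2 + p2^2 + γ1*(q1*p1 + q2*p2) + γ2*(q1*p1 + q2*p2)^2
            + γ3*(q1*p1 + q2*p2)^3 + γ4*(q1*p1 + q2*p2)^4)
       (fun q1 q2 p1 p2 =>
          (p2^2 + γ1*q2*p2 + γ2*(q1^2 + q2^2)*p2^2
            + γ3*(q2^3*p2^3 + (q1^3 + 3*q1*q2^2)*p2^2*p1 - q2^3*p2*p1^2))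
          + γ4*((q2^4 - q1^4)*p2^4 + 4*(q1^3*q2 + q1*q2^3)*p2^3*p1
                + (q1^4 - q2^4)*p2^2*p1^2)) = 0 := by
  funext q1 q2 p1 p2
  simp only [pb]
  simp (disch := fun_prop) only [deriv_fun_add, deriv_fun_mul, deriv_pow_field, deriv_const_mul,
    deriv_const_mul_field, deriv_mul_const_field, deriv_hmul, deriv_fun_pow, deriv_add_const', deriv_const_add', deriv_fun_sub, deriv_id'',
    deriv_const', Differentiable.differentiableAt, Differentiable.pow,
    Differentiable.mul, Differentiable.add, Differentiable.sub, Differentiable.const_mul,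
    differentiable_fun_id, differentiable_const]
  show _ = (0:ℝ)
  ring
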